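/- Let δ : ℕ → ℝ with δ(0)=0, and D ≥ 1. Suppose J and m satisfy m = D(D+1)·J − 2·Σ_{i=1}^{D−1} Σ_{j=1}^{i} δ(j) and additionally δ(D) + (f(D+1) + f(D−1))/2 = m + (f(1)+f(0))/2 where f(d) = d(d+1)J − 2Σ_{i=1}^{d−1}Σ_{j=1}^{i}δ(j) for d ≤ D, f(D+1) = m + f(1)/2 − J, f(0)=0, f(1)=2J. Then m = Σ_{i=1}^{D} (2i − D)·δ(i). -/
import Mathlib

lemma swap_sum_aux (g : ℕ → ℝ) (n : ℕ) :
    ∑ i ∈ Finset.Icc 1 n, ∑ j ∈ Finset.Icc 1 i, g j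
      = ∑ j ∈ Finset.Icc 1 n, ((n : ℝ) + 1 - j) * g j := by
  induction n with
  | zero => simp
  | succ n ih =>
      rw [Finset.sum_Icc_succ_top (by omega : 1 ≤ n + 1), ih,
          Finset.sum_Icc_succ_top (by omega : 1 ≤ n + 1),
          Finset.sum_Icc_succ_top (by omega : 1 ≤ n + 1)]
      push_cast
      have : ∀ j ∈ Finset.Icc 1 n,
          ((n : ℝ) + 1 + 1 - j) * g j = ((n : ℝ) + 1 - j) * g j + g j :=
        fun j _ => by ring
      rw [Finset.sum_congr rfl this, Finset.sum_add_distrib]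
      ring

theorem whittle_index_from_threshold_equations (δ : ℕ → ℝ) (h0 : δ 0 = 0)
    (D : ℕ) (hD : 1 ≤ D) (J m : ℝ) (f : ℕ → ℝ)
    (hf : ∀ d : ℕ, d ≤ D →
      f d = (d : ℝ) * (d + 1) * J -
        2 * ∑ i ∈ Finset.Icc 1 (d - 1), ∑ j ∈ Finset.Icc 1 i, δ j)
    (hfD1 : f (D + 1) = m + f 1 / 2 - J)
    (hf0 : f 0 = 0) (hf1 : f 1 = 2 * J)
    (hm : m = (D : ℝ) * (D + 1) * J -
      2 * ∑ i ∈ Finset.Icc 1 (D - 1), ∑ j ∈ Finset.Icc 1 i, δ j)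
    (hcont : δ D + (f (D + 1) + f (D - 1)) / 2 = m + (f 1 + f 0) / 2) :
    m = ∑ i ∈ Finset.Icc 1 D, ((2 * i : ℝ) - D) * δ i := by
  obtain ⟨k, rfl⟩ : ∃ k, D = k + 1 := ⟨D - 1, by omega⟩
  simp only [Nat.add_sub_cancel] at hcont hm ⊢
  have hfk := hf k (by omega)
  rw [hfD1, hf1, hf0, hfk] at hcont
  -- abbreviations (as plain sums, atoms for linear_combination)
  have E1 : (∑ i ∈ Finset.Icc 1 k, ∑ j ∈ Finset.Icc 1 i, δ j)
      = (∑ i ∈ Finset.Icc 1 (k - 1), ∑ j ∈ Finset.Icc 1 i, δ j)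
        + ∑ j ∈ Finset.Icc 1 k, δ j := by
    cases k with
    | zero => simp
    | succ n =>
        rw [Nat.add_sub_cancel, Finset.sum_Icc_succ_top (by omega : 1 ≤ n + 1)]
  have E2 : (∑ j ∈ Finset.Icc 1 (k + 1), δ j)
      = (∑ j ∈ Finset.Icc 1 k, δ j) + δ (k + 1) :=
    Finset.sum_Icc_succ_top (by omega) _
  have hJ : J * ((k : ℝ) + 2) = ∑ j ∈ Finset.Icc 1 (k + 1), δ j := by
    push_cast at hcont hm ⊢
    linear_combination -hcont - hm / 2 + E1 - E2
  have hswap := swap_sum_aux δ k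
  have key : (∑ i ∈ Finset.Icc 1 (k + 1), ((2 * i : ℝ) - ((k : ℝ) + 1)) * δ i)
      = ((k : ℝ) + 1) * (∑ j ∈ Finset.Icc 1 (k + 1), δ j)
        - 2 * ∑ j ∈ Finset.Icc 1 k, ((k : ℝ) + 1 - j) * δ j := by
    rw [Finset.sum_Icc_succ_top (by omega : 1 ≤ k + 1), E2]
    have : ∀ i ∈ Finset.Icc 1 k,
        ((2 * i : ℝ) - ((k : ℝ) + 1)) * δ i
          = ((k : ℝ) + 1) * δ i - 2 * (((k : ℝ) + 1 - i) * δ i) :=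
      fun i _ => by ring
    rw [Finset.sum_congr rfl this, Finset.sum_sub_distrib, ← Finset.mul_sum,
        ← Finset.mul_sum]
    push_cast
    ring
  push_cast at key ⊢
  rw [key, hm, hswap]
  push_cast
  linear_combination ((k : ℝ) + 1) * hJ
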